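/- For λ > 0, define ψ : ℝ² → ℝ³ by ψ(x,y) = (√(1+λ²)/λ)·(sinh x, cosh x · sinh y + cosh y/√(1+λ²), cosh x · cosh y + sinh y/√(1+λ²)) and η(x,y) = (y + √(1+λ²)·cosh x)/λ. Then ψ takes values in ℍ² = {x₁² + x₂² - x₃² = -1, x₃ > 0}, and the map Ψ = (ψ, η) : ℝ² → ℍ² × ℝ is conformal with |Ψ_x|² = |Ψ_y|² = ((1+λ²)/λ²)·cosh²x and ⟨Ψ_x, Ψ_y⟩ = 0. -/

import Mathlib

/-- Lorentz inner product on ℝ³₁. -/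
def lorentzInner (u v : Fin 3 → ℝ) : ℝ := u 0 * v 0 + u 1 * v 1 - u 2 * v 2

/-- For `λ > 0`, the map `Ψ = (ψ, η) : ℝ² → ℍ² × ℝ` of Example 3 is a conformal
CMC embedding: `ψ` takes values in ℍ², and
`|Ψ_x|² = |Ψ_y|² = ((1+λ²)/λ²)·cosh²x`, `⟨Ψ_x, Ψ_y⟩ = 0`
(product metric: Lorentz inner product on the ℍ² factor plus the ℝ factor). -/
theorem stmt10 (l : ℝ) (hl : 0 < l)
    (ψ : ℝ → ℝ → Fin 3 → ℝ) (η : ℝ → ℝ → ℝ)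
    (hψ : ψ = fun x y => fun i => (Real.sqrt (1 + l ^ 2) / l) *
      (![Real.sinh x,
         Real.cosh x * Real.sinh y + Real.cosh y / Real.sqrt (1 + l ^ 2),
         Real.cosh x * Real.cosh y + Real.sinh y / Real.sqrt (1 + l ^ 2)] i))
    (hη : η = fun x y => (y + Real.sqrt (1 + l ^ 2) * Real.cosh x) / l) :
    (∀ x y, lorentzInner (ψ x y) (ψ x y) = -1 ∧ 0 < ψ x y 2) ∧
    (∀ x y, lorentzInner (deriv (fun t => ψ t y) x) (deriv (fun t => ψ t y) x)
        + (deriv (fun t => η t y) x) ^ 2 = ((1 + l ^ 2) / l ^ 2) * (Real.cosh x) ^ 2) ∧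
    (∀ x y, lorentzInner (deriv (fun t => ψ x t) y) (deriv (fun t => ψ x t) y)
        + (deriv (fun t => η x t) y) ^ 2 = ((1 + l ^ 2) / l ^ 2) * (Real.cosh x) ^ 2) ∧
    (∀ x y, lorentzInner (deriv (fun t => ψ t y) x) (deriv (fun t => ψ x t) y)
        + (deriv (fun t => η t y) x) * (deriv (fun t => η x t) y) = 0) := by
  have hl0 : l ≠ 0 := ne_of_gt hl
  set s := Real.sqrt (1 + l ^ 2) with hsdef
  have hs2 : s ^ 2 = 1 + l ^ 2 := Real.sq_sqrt (by positivity)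
  have hs0 : 0 < s := Real.sqrt_pos.2 (by positivity)
  have hsne : s ≠ 0 := ne_of_gt hs0
  -- x-derivative of ψ
  have hdx : ∀ x y, deriv (fun t => ψ t y) x
      = fun i => (s / l) * (![Real.cosh x, Real.sinh x * Real.sinh y,
          Real.sinh x * Real.cosh y] i) := by
    intro x y
    subst hψ
    refine HasDerivAt.deriv (hasDerivAt_pi.2 fun i => ?_)
    fin_cases i <;> simp only [Matrix.cons_val_zero, Matrix.cons_val_one, Matrix.head_cons,
      Matrix.cons_val_two, Matrix.tail_cons]
    · exact (Real.hasDerivAt_sinh x).const_mul _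
    · exact (((Real.hasDerivAt_cosh x).mul_const _).add_const _).const_mul _
    · exact (((Real.hasDerivAt_cosh x).mul_const _).add_const _).const_mul _
  -- y-derivative of ψ
  have hdy : ∀ x y, deriv (fun t => ψ x t) y
      = fun i => (s / l) * (![0, Real.cosh x * Real.cosh y + Real.sinh y / s,
          Real.cosh x * Real.sinh y + Real.cosh y / s] i) := by
    intro x y
    subst hψ
    refine HasDerivAt.deriv (hasDerivAt_pi.2 fun i => ?_)
    fin_cases i <;> simp only [Matrix.cons_val_zero, Matrix.cons_val_one, Matrix.head_cons,
      Matrix.cons_val_two, Matrix.tail_cons]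
    · simpa using (hasDerivAt_const y _).const_mul (s / l)
    · have : HasDerivAt (fun t => Real.cosh x * Real.sinh t + Real.cosh t / s)
          (Real.cosh x * Real.cosh y + Real.sinh y / s) y :=
        ((Real.hasDerivAt_sinh y).const_mul _).add ((Real.hasDerivAt_cosh y).div_const s)
      exact this.const_mul _
    · have : HasDerivAt (fun t => Real.cosh x * Real.cosh t + Real.sinh t / s)
          (Real.cosh x * Real.sinh y + Real.cosh y / s) y :=
        ((Real.hasDerivAt_cosh y).const_mul _).add ((Real.hasDerivAt_sinh y).div_const s)
      exact this.const_mul _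
  have hex : ∀ x y, deriv (fun t => η t y) x = s * Real.sinh x / l := by
    intro x y
    subst hη
    exact HasDerivAt.deriv ((((Real.hasDerivAt_cosh x).const_mul s).const_add y).div_const l)
  have hey : ∀ x y, deriv (fun t => η x t) y = 1 / l := by
    intro x y
    subst hη
    have : HasDerivAt (fun t : ℝ => (t + s * Real.cosh x) / l) (1 / l) y := by
      simpa using ((hasDerivAt_id y).add_const (s * Real.cosh x)).div_const l
    exact this.deriv
  refine ⟨?_, ?_, ?_, ?_⟩
  · intro x y
    constructor
    · simp only [hψ, lorentzInner, Matrix.cons_val_zero, Matrix.cons_val_one, Matrix.head_cons,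
        Matrix.cons_val_two, Matrix.tail_cons]
      have hcx := Real.cosh_sq x
      have hcy := Real.cosh_sq y
      field_simp
      linear_combination (-(s^2)) * hcx + (1 - s^2*Real.cosh x^2) * hcy + (-1) * hs2
    · simp only [hψ, Matrix.cons_val_two, Matrix.tail_cons, Matrix.head_cons]
      have h1 : 1 ≤ Real.cosh x := Real.one_le_cosh x
      have h2 : |Real.sinh y| < Real.cosh y := by
        nlinarith [Real.cosh_sq y, Real.cosh_pos y, abs_nonneg (Real.sinh y),
          sq_abs (Real.sinh y)]
      have h3 : Real.sinh y / s > -Real.cosh y := by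
        have hs1 : 1 ≤ s := by nlinarith [hs2, hs0]
        have := neg_abs_le (Real.sinh y)
        have habs : |Real.sinh y / s| ≤ |Real.sinh y| := by
          rw [abs_div, abs_of_pos hs0]
          exact div_le_self (abs_nonneg _) hs1
        nlinarith [neg_abs_le (Real.sinh y / s)]
      have : 0 < Real.cosh x * Real.cosh y + Real.sinh y / s := by
        nlinarith [Real.cosh_pos y]
      positivity
  · intro x y
    rw [hdx, hex]
    simp only [lorentzInner, Matrix.cons_val_zero, Matrix.cons_val_one, Matrix.head_cons,
      Matrix.cons_val_two, Matrix.tail_cons]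
    have hcx := Real.cosh_sq x
    have hcy := Real.cosh_sq y
    field_simp
    linear_combination (Real.cosh x^2) * hs2 - (s^2*Real.sinh x^2) * hcy
  · intro x y
    rw [hdy, hey]
    simp only [lorentzInner, Matrix.cons_val_zero, Matrix.cons_val_one, Matrix.head_cons,
      Matrix.cons_val_two, Matrix.tail_cons]
    have hcx := Real.cosh_sq x
    have hcy := Real.cosh_sq y
    field_simp
    linear_combination (s^2*Real.cosh x^2 - 1) * hcy + (Real.cosh x^2) * hs2
  · intro x y
    rw [hdx, hdy, hex, hey]
    simp only [lorentzInner, Matrix.cons_val_zero, Matrix.cons_val_one, Matrix.head_cons,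
      Matrix.cons_val_two, Matrix.tail_cons]
    have hcy := Real.cosh_sq y
    field_simp
    linear_combination (-(s*Real.sinh x)) * hcy
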